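/- Consider a population protocol with state set Q = {r^ω, b^ω, r, b} and transition rules: (r^ω,r^ω)→(r,b), (r^ω,b^ω)→(b,b), (b^ω,r^ω)→(b,b), (r^ω,r)→(r,r^ω), (r,r^ω)→(r^ω,r), (b^ω,b)→(b,b^ω), (b,b^ω)→(b^ω,b), (r^ω,b)→(r,b^ω), (b,r^ω)→(b^ω,r), (b^ω,r)→(b,r^ω), (r,b^ω)→(r^ω,b), and all other pairs map to themselves. Then in any configuration reachable from the all-r^ω configuration, the equation #r = #b + 2·#b^ω holds, where #s denotes the number of agents in state s. -/
import Mathlib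


/-- States of the four-state protocol: r^ω, b^ω, r, b. -/
inductive St : Type
  | rw | bw | r | b
deriving DecidableEq

/-- Deterministic transition function of the protocol. -/
def delta : St → St → St × St
  | .rw, .rw => (.r, .b)
  | .rw, .bw => (.b, .b)
  | .bw, .rw => (.b, .b)
  | .rw, .r  => (.r, .rw)
  | .r,  .rw => (.rw, .r)
  | .bw, .b  => (.b, .bw)
  | .b,  .bw => (.bw, .b)
  | .rw, .b  => (.r, .bw)
  | .b,  .rw => (.bw, .r)
  | .bw, .r  => (.b, .rw)
  | .r,  .bw => (.rw, .b)
  | p, q     => (p, q)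

/-- One step: apply the rule to an ordered pair of distinct agents. -/
def Step {n : ℕ} (C C' : Fin n → St) : Prop :=
  ∃ i j : Fin n, i ≠ j ∧
    C' = Function.update (Function.update C i (delta (C i) (C j)).1) j
          (delta (C i) (C j)).2

/-- Number of agents in state `s`. -/
def cnt {n : ℕ} (C : Fin n → St) (s : St) : ℕ :=
  (Finset.univ.filter fun a => C a = s).card

def wt : St → ℤ
  | .r => 1 | .b => -1 | .bw => -2 | .rw => 0

lemma wt_eq (s : St) : wt s =
    (if s = .r then (1:ℤ) else 0) - (if s = .b then 1 else 0)
      - 2 * (if s = .bw then 1 else 0) := by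
  cases s <;> simp [wt]

lemma sum_wt {n : ℕ} (C : Fin n → St) :
    ∑ a, wt (C a) = (cnt C .r : ℤ) - cnt C .b - 2 * cnt C .bw := by
  simp only [wt_eq, Finset.sum_sub_distrib, ← Finset.mul_sum, Finset.sum_boole,
    cnt]

lemma wt_delta (p q : St) :
    wt (delta p q).1 + wt (delta p q).2 = wt p + wt q := by cases p <;> cases q <;> rfl

lemma step_sum {n : ℕ} {C C' : Fin n → St} (h : Step C C') :
    ∑ a, wt (C' a) = ∑ a, wt (C a) := by
  obtain ⟨i, j, hij, rfl⟩ := h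
  set d := delta (C i) (C j) with hd
  have hji : j ≠ i := hij.symm
  have hmemj : j ∈ (Finset.univ : Finset (Fin n)) := Finset.mem_univ j
  have hmemi : i ∈ (Finset.univ : Finset (Fin n)).erase j :=
    Finset.mem_erase.mpr ⟨hij, Finset.mem_univ i⟩
  set D := Function.update (Function.update C i d.1) j d.2 with hD
  have h1 : ∑ a, wt (D a) = wt (D j) + ∑ a ∈ Finset.univ.erase j, wt (D a) :=
    (Finset.add_sum_erase _ _ hmemj).symm
  have h2 : ∑ a ∈ Finset.univ.erase j, wt (D a) =
      wt (D i) + ∑ a ∈ (Finset.univ.erase j).erase i, wt (D a) :=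
    (Finset.add_sum_erase _ _ hmemi).symm
  have h3 : ∑ a, wt (C a) = wt (C j) + ∑ a ∈ Finset.univ.erase j, wt (C a) :=
    (Finset.add_sum_erase _ _ hmemj).symm
  have h4 : ∑ a ∈ Finset.univ.erase j, wt (C a) =
      wt (C i) + ∑ a ∈ (Finset.univ.erase j).erase i, wt (C a) :=
    (Finset.add_sum_erase _ _ hmemi).symm
  have hrest : ∑ a ∈ (Finset.univ.erase j).erase i, wt (D a) =
      ∑ a ∈ (Finset.univ.erase j).erase i, wt (C a) := by
    refine Finset.sum_congr rfl fun a ha => ?_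
    have hai : a ≠ i := (Finset.mem_erase.mp ha).1
    have haj : a ≠ j := (Finset.mem_erase.mp (Finset.mem_erase.mp ha).2).1
    simp [hD, Function.update_of_ne haj, Function.update_of_ne hai]
  have hDj : D j = d.2 := by simp [hD]
  have hDi : D i = d.1 := by simp [hD, Function.update_of_ne hij]
  rw [h1, h2, h3, h4, hrest, hDi, hDj]
  have := wt_delta (C i) (C j)
  rw [← hd] at this
  linarith

theorem stmt0 (n : ℕ) (C : Fin n → St)
    (h : Relation.ReflTransGen Step (fun _ => St.rw) C) :
    cnt C .r = cnt C .b + 2 * cnt C .bw := by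
  have hsum : ∑ a, wt (C a) = 0 := by
    induction h with
    | refl => simp [wt]
    | tail _ hstep ih => rw [step_sum hstep, ih]
  rw [sum_wt] at hsum
  omega
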